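/- (Orbifold DVV / twisted Virasoro constraint.) Let K be a field of characteristic zero and (A, η) a finite-dimensional commutative Frobenius algebra over K with basis e₁, …, e_s, Euler element 𝐞, and amplitudes Ω_{g,n}(v₁,…,vₙ) = ε(v₁⋯vₙ·𝐞^g). Suppose given, for all integers g ≥ 0, n ≥ 1, numbers T_{g,n}(k₁,…,kₙ) ∈ K for (k₁,…,kₙ) ∈ ℤ^n (with the conventions T_{g,n} := 0 whenever g < 0 and T_{g,n}(k) := 0 whenever some k_i < 0) which satisfy, for every (g,n) with 2g−2+n > 0 and every (k₁,…,kₙ) with k₁ ≥ 1: T_{g,n}(k₁,…,kₙ) = Σ_{j=2}^{n} [(2k₁+2k_j−1)!! / ((2k₁−1)!!(2k_j−1)!!)] T_{g,n−1}(k₁+k_j−1, k_{[n]∖{1,j}}) + (1/2) Σ_{l+m=k₁−2, l,m ≥ 0} [(2l+1)!!(2m+1)!! / (2k₁+1)!!] ( T_{g−1,n+1}(l, m, k_{[n]∖{1}}) + Σ^{stable}_{g₁+g₂=g, I⊔J={2,…,n}} T_{g₁,|I|+1}(l, k_I) T_{g₂,|J|+1}(m, k_J) ), where the superscript 'stable'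 means that the pairs (g₁, |I|+1) = (0,1) and (g₂, |J|+1) = (0,1) are excluded. Define T^Ω_{g,n}(k₁,…,kₙ; v₁,…,vₙ) := T_{g,n}(k₁,…,kₙ) · Ω_{g,n}(v₁,…,vₙ). Then for every (g,n) with 2g−2+n > 0, every k with k₁ ≥ 1 and all v₁,…,vₙ ∈ A: T^Ω_{g,n}(k; v₁,…,vₙ) = Σ_{j=2}^{n} [(2k₁+2k_j−1)!! / ((2k₁−1)!!(2k_j−1)!!)] T^Ω_{g,n−1}(k₁+k_j−1, k_{[n]∖{1,j}}; v₁·v_j, v_{[n]∖{1,j}}) + (1/2) Σ_{l+m=k₁−2} [(2l+1)!!(2m+1)!! / (2k₁+1)!!] ( Σ_{i,j,a,b} η(v₁, e_i·e_j) η^{ia} η^{jb} T^Ω_{g−1,n+1}(l, m, k_{[n]∖{1}}; e_a, e_b, v_{[n]∖{1}}) + Σ^{stable}_{g₁+g₂=g, I⊔J={2,…,n}} Σ_{p,q,a,b} η(v₁, e_p·e_q) η^{pa} η^{qb} T^Ω_{g₁,|I|+1}(l, k_I; e_a, v_I) T^Ω_{g₂,|J|+1}(m, k_J; e_b, v_J)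 ). -/

import Mathlib

/-- The subtuple of a tuple `f : Fin m → α` indexed by a finite set `S` of indices,
taken in increasing order. -/
noncomputable def subT {α : Type*} {m : ℕ} (f : Fin m → α) (S : Finset (Fin m)) :
    Fin S.card → α :=
  fun i => f (S.orderIsoOfFin rfl i)

/-- The odd double factorial `(2k−1)!! = Π_{i=1}^{k} (2i−1)`, with `(−1)!! = 1`;
note `(2k+1)!! = oddDF K (k+1)`. -/
noncomputable def oddDF (K : Type*) [Field K] (k : ℕ) : K :=
  ∏ i ∈ Finset.range k, (2 * (i : K) + 1)

/-- The 2D TQFT twist `T^Ω_{g,n}(k; v₁,…,vₙ) := T_{g,n}(k)·Ω_{g,n}(v₁,…,vₙ)` of the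
correlators `T`, where `Ω_{g,n}(v₁,…,vₙ) = ε(v₁⋯vₙ·𝐞^g)`, `ε = η(1,·)` and `E = 𝐞` is the
Euler element (for `g < 0` the convention `T_{g,n} = 0` makes the value vanish). -/
noncomputable def twistT {K A : Type*} [Field K] [CommRing A] [Algebra K A]
    (η : LinearMap.BilinForm K A) (E : A)
    (T : ℤ → (n : ℕ) → (Fin n → ℕ) → K)
    (g : ℤ) (n : ℕ) (k : Fin n → ℕ) (v : Fin n → A) : K :=
  T g n k * η 1 ((∏ i, v i) * E ^ g.toNat)

lemma prodSubT {A : Type*} [CommMonoid A] {m : ℕ} (f : Fin m → A) (S : Finset (Fin m)) :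
    ∏ i, subT f S i = ∏ x ∈ S, f x := by
  rw [← Finset.prod_coe_sort S f]
  exact Fintype.prod_equiv (S.orderIsoOfFin rfl).toEquiv _ _ (fun i => rfl)

section Contr
variable {K A : Type*} [Field K] [CommRing A] [Algebra K A]
    (η : LinearMap.BilinForm K A)
    (hsym : ∀ u v : A, η u v = η v u)
    (hinv : ∀ u v w : A, η (u * v) w = η u (v * w))
    {s : ℕ} (e : Module.Basis (Fin s) K A)
    (N : Matrix (Fin s) (Fin s) K)
    (hN : (Matrix.of fun i j => η (e i) (e j)) * N = 1)

include hN in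
lemma Lelem (u : A) : ∑ i, ∑ a, (η u (e i) * N i a) • e a = u := by
  have key : (∑ i, ∑ a, N i a • (LinearMap.smulRight (η.flip (e i)) (e a)) : A →ₗ[K] A)
      = LinearMap.id := by
    apply Module.Basis.ext e
    intro c
    simp only [LinearMap.sum_apply, LinearMap.smul_apply, LinearMap.smulRight_apply,
      LinearMap.flip_apply, LinearMap.id_apply, smul_smul]
    rw [Finset.sum_comm]
    have h1 : ∀ a, (∑ i, N i a * η (e c) (e i)) = (1 : Matrix (Fin s) (Fin s) K) c a := by
      intro a
      rw [← hN, Matrix.mul_apply]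
      simp [Matrix.of_apply, mul_comm]
    calc ∑ a, ∑ i, (N i a * η (e c) (e i)) • e a
        = ∑ a, (∑ i, N i a * η (e c) (e i)) • e a := by
          simp [Finset.sum_smul]
      _ = ∑ a, ((1 : Matrix (Fin s) (Fin s) K) c a) • e a := by
          simp only [h1]
      _ = e c := by
          simp [Matrix.one_apply]
  have := LinearMap.congr_fun key u
  simp only [LinearMap.sum_apply, LinearMap.smul_apply, LinearMap.smulRight_apply,
    LinearMap.flip_apply, LinearMap.id_apply, smul_smul] at this
  calc ∑ i, ∑ a, (η u (e i) * N i a) • e a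
      = ∑ i, ∑ a, (N i a * η u (e i)) • e a := by
        simp [mul_comm]
    _ = u := this

include hN in
lemma Lc0 (u w : A) : ∑ i, ∑ a, η u (e i) * N i a * η (e a) w = η u w := by
  conv_rhs => rw [← Lelem η e N hN u]
  simp [map_sum, LinearMap.sum_apply, LinearMap.map_smul₂, smul_eq_mul]

include hinv hN in
lemma I1 (v0 X : A) :
    ∑ i, ∑ j, ∑ a, ∑ b, η v0 (e i * e j) * N i a * N j b * η 1 (e a * (e b * X))
      = η 1 (v0 * ((∑ i, ∑ a, N i a • (e i * e a)) * X)) := by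
  have e2 : ∀ a b : Fin s, η 1 (e a * (e b * X)) = η (e b) (e a * X) := by
    intro a b
    rw [← hinv, one_mul, ← hinv, mul_comm (e a) (e b), hinv]
  calc ∑ i, ∑ j, ∑ a, ∑ b, η v0 (e i * e j) * N i a * N j b * η 1 (e a * (e b * X))
      = ∑ i, ∑ a, N i a * ∑ j, ∑ b, η (v0 * e i) (e j) * N j b * η (e b) (e a * X) := by
        refine Finset.sum_congr rfl fun i _ => ?_
        rw [Finset.sum_comm]
        refine Finset.sum_congr rfl fun a _ => ?_
        rw [Finset.mul_sum]
        refine Finset.sum_congr rfl fun j _ => ?_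
        rw [Finset.mul_sum]
        refine Finset.sum_congr rfl fun b _ => ?_
        rw [e2, ← hinv]; ring
    _ = ∑ i, ∑ a, N i a * η (v0 * e i) (e a * X) := by
        refine Finset.sum_congr rfl fun i _ => ?_
        refine Finset.sum_congr rfl fun a _ => ?_
        rw [Lc0 η e N hN (v0 * e i) (e a * X)]
    _ = η v0 (∑ i, ∑ a, N i a • (e i * (e a * X))) := by
        rw [map_sum]
        refine Finset.sum_congr rfl fun i _ => ?_
        rw [map_sum]
        refine Finset.sum_congr rfl fun a _ => ?_
        rw [map_smul, smul_eq_mul, hinv]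
    _ = η 1 (v0 * ((∑ i, ∑ a, N i a • (e i * e a)) * X)) := by
        rw [← hinv, one_mul]
        congr 1
        rw [Finset.sum_mul]
        refine Finset.sum_congr rfl fun i _ => ?_
        rw [Finset.sum_mul]
        refine Finset.sum_congr rfl fun a _ => ?_
        rw [smul_mul_assoc, mul_assoc]

include hinv hN in
lemma I2 (v0 Y Z : A) :
    ∑ p, ∑ q, ∑ a, ∑ b, η v0 (e p * e q) * N p a * N q b * (η 1 (e a * Y) * η 1 (e b * Z))
      = η 1 (v0 * (Y * Z)) := by
  have eps : ∀ (a : Fin s) (W : A), η 1 (e a * W) = η (e a) W := by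
    intro a W; rw [← hinv, one_mul]
  calc ∑ p, ∑ q, ∑ a, ∑ b, η v0 (e p * e q) * N p a * N q b * (η 1 (e a * Y) * η 1 (e b * Z))
      = ∑ p, ∑ a, (N p a * η (e a) Y) * ∑ q, ∑ b, η (v0 * e p) (e q) * N q b * η (e b) Z := by
        refine Finset.sum_congr rfl fun p _ => ?_
        rw [Finset.sum_comm]
        refine Finset.sum_congr rfl fun a _ => ?_
        rw [Finset.mul_sum]
        refine Finset.sum_congr rfl fun q _ => ?_
        rw [Finset.mul_sum]
        refine Finset.sum_congr rfl fun b _ => ?_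
        rw [eps, eps, ← hinv]; ring
    _ = ∑ p, ∑ a, η (v0 * Z) (e p) * N p a * η (e a) Y := by
        refine Finset.sum_congr rfl fun p _ => Finset.sum_congr rfl fun a _ => ?_
        rw [Lc0 η e N hN (v0 * e p) Z]
        have h : η (v0 * e p) Z = η (v0 * Z) (e p) := by
          rw [hinv, mul_comm (e p) Z, ← hinv]
        rw [h]; ring
    _ = η (v0 * Z) Y := Lc0 η e N hN (v0 * Z) Y
    _ = η 1 (v0 * (Y * Z)) := by
        rw [hinv, mul_comm Z Y, ← hinv, ← hinv, one_mul, hinv]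
end Contr

/-- (Orbifold DVV / twisted Virasoro constraint.) If the correlators
`T_{g,n}(k₁,…,kₙ)` satisfy the DVV-type recursion, then their twists
`T^Ω_{g,n}(k; v) = T_{g,n}(k)·Ω_{g,n}(v)` by the 2D TQFT of the Frobenius algebra `(A, η)`
satisfy the orbifold DVV equation, in which the genus–reduction and stable splitting terms
are contracted through the coproduct coefficients
`Σ η(v₁, e_i·e_j) η^{ia} η^{jb} (…e_a…)(…e_b…)`. -/
theorem stmt11 (K A : Type*) [Field K] [CharZero K] [CommRing A] [Algebra K A]
    (η : LinearMap.BilinForm K A)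
    (hsym : ∀ u v : A, η u v = η v u)
    (hnd : ∀ v : A, (∀ u : A, η v u = 0) → v = 0)
    (hinv : ∀ u v w : A, η (u * v) w = η u (v * w))
    {s : ℕ} (e : Module.Basis (Fin s) K A)
    (N : Matrix (Fin s) (Fin s) K)
    (hN : (Matrix.of fun i j => η (e i) (e j)) * N = 1)
    (hN' : N * (Matrix.of fun i j => η (e i) (e j)) = 1)
    (E : A) (hE : E = ∑ a, ∑ b, N a b • (e a * e b))
    (T : ℤ → (n : ℕ) → (Fin n → ℕ) → K)
    (hTneg : ∀ g : ℤ, g < 0 → ∀ (n : ℕ) (k : Fin n → ℕ), T g n k = 0)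
    (hrec : ∀ (g m : ℕ) (k : Fin (m + 1) → ℕ),
      0 < 2 * (g : ℤ) - 2 + (m + 1) → 1 ≤ k 0 →
      T g (m + 1) k =
        (∑ j : Fin m,
            oddDF K (k 0 + k j.succ) / (oddDF K (k 0) * oddDF K (k j.succ)) *
              T g (({j}ᶜ : Finset (Fin m)).card + 1)
                (Fin.cons (k 0 + k j.succ - 1) (subT (Fin.tail k) {j}ᶜ)))
        + (1 / 2 : K) * ∑ l ∈ Finset.range (k 0 - 1),
            oddDF K (l + 1) * oddDF K (k 0 - 2 - l + 1) / oddDF K (k 0 + 1) *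
              (T ((g : ℤ) - 1) (m + 2)
                  (Fin.cons l (Fin.cons (k 0 - 2 - l) (Fin.tail k)))
                + ∑ g₁ ∈ Finset.range (g + 1), ∑ S : Finset (Fin m),
                    if (g₁ = 0 ∧ S = ∅) ∨ (g₁ = g ∧ S = Finset.univ) then 0
                    else
                      T g₁ (S.card + 1) (Fin.cons l (subT (Fin.tail k) S)) *
                        T ((g : ℤ) - g₁) (Sᶜ.card + 1)
                          (Fin.cons (k 0 - 2 - l) (subT (Fin.tail k) Sᶜ)))) :
    ∀ (g m : ℕ) (k : Fin (m + 1) → ℕ) (v : Fin (m + 1) → A),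
      0 < 2 * (g : ℤ) - 2 + (m + 1) → 1 ≤ k 0 →
      twistT η E T g (m + 1) k v =
        (∑ j : Fin m,
            oddDF K (k 0 + k j.succ) / (oddDF K (k 0) * oddDF K (k j.succ)) *
              twistT η E T g (({j}ᶜ : Finset (Fin m)).card + 1)
                (Fin.cons (k 0 + k j.succ - 1) (subT (Fin.tail k) {j}ᶜ))
                (Fin.cons (v 0 * v j.succ) (subT (Fin.tail v) {j}ᶜ)))
        + (1 / 2 : K) * ∑ l ∈ Finset.range (k 0 - 1),
            oddDF K (l + 1) * oddDF K (k 0 - 2 - l + 1) / oddDF K (k 0 + 1) *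
              ((∑ i, ∑ j, ∑ a, ∑ b,
                  η (v 0) (e i * e j) * N i a * N j b *
                    twistT η E T ((g : ℤ) - 1) (m + 2)
                      (Fin.cons l (Fin.cons (k 0 - 2 - l) (Fin.tail k)))
                      (Fin.cons (e a) (Fin.cons (e b) (Fin.tail v))))
                + ∑ g₁ ∈ Finset.range (g + 1), ∑ S : Finset (Fin m),
                    if (g₁ = 0 ∧ S = ∅) ∨ (g₁ = g ∧ S = Finset.univ) then 0
                    else
                      ∑ p, ∑ q, ∑ a, ∑ b,
                        η (v 0) (e p * e q) * N p a * N q b *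
                          (twistT η E T g₁ (S.card + 1)
                              (Fin.cons l (subT (Fin.tail k) S))
                              (Fin.cons (e a) (subT (Fin.tail v) S)) *
                            twistT η E T ((g : ℤ) - g₁) (Sᶜ.card + 1)
                              (Fin.cons (k 0 - 2 - l) (subT (Fin.tail k) Sᶜ))
                              (Fin.cons (e b) (subT (Fin.tail v) Sᶜ)))) := by
  intro g m k v hst hk
  have hT := hrec g m k hst hk
  have hvprod : ∏ i, v i = v 0 * ∏ i, Fin.tail v i := by
    rw [Fin.prod_univ_succ]; rfl
  simp only [twistT, Int.toNat_natCast]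
  rw [hT, add_mul, Finset.sum_mul]
  congr 1
  · refine Finset.sum_congr rfl fun j _ => ?_
    have hΩ : (∏ i, Fin.cons (v 0 * v j.succ) (subT (Fin.tail v) {j}ᶜ) i) = ∏ i, v i := by
      rw [Fin.prod_cons, prodSubT, Finset.compl_singleton, hvprod, mul_assoc]
      congr 1
      exact Finset.mul_prod_erase Finset.univ (Fin.tail v) (Finset.mem_univ j)
    rw [hΩ]; ring
  · rw [mul_assoc, Finset.sum_mul]
    refine congrArg _ (Finset.sum_congr rfl fun l _ => ?_)
    rw [mul_assoc, add_mul]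
    refine congrArg _ (congrArg₂ _ ?_ ?_)
    · -- genus reduction term
      rcases Nat.eq_zero_or_pos g with hg | hg
      · subst hg
        have h0 : T (-1) (m + 2)
            (Fin.cons l (Fin.cons (k 0 - 2 - l) (Fin.tail k))) = 0 :=
          hTneg (-1) (by norm_num) _ _
        simp [h0]
      · have htn : (((g:ℤ) - 1)).toNat = g - 1 := by omega
        have hTfac :
            (∑ i, ∑ j, ∑ a, ∑ b, η (v 0) (e i * e j) * N i a * N j b *
              (T ((g:ℤ) - 1) (m + 2) (Fin.cons l (Fin.cons (k 0 - 2 - l) (Fin.tail k))) *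
                η 1 ((∏ x, Fin.cons (e a) (Fin.cons (e b) (Fin.tail v)) x) *
                  E ^ (((g:ℤ) - 1)).toNat)))
            = T ((g:ℤ) - 1) (m + 2) (Fin.cons l (Fin.cons (k 0 - 2 - l) (Fin.tail k))) *
              ∑ i, ∑ j, ∑ a, ∑ b, η (v 0) (e i * e j) * N i a * N j b *
                η 1 (e a * (e b * ((∏ x, Fin.tail v x) * E ^ (g - 1)))) := by
          rw [Finset.mul_sum]
          refine Finset.sum_congr rfl fun i _ => ?_
          rw [Finset.mul_sum]
          refine Finset.sum_congr rfl fun j _ => ?_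
          rw [Finset.mul_sum]
          refine Finset.sum_congr rfl fun a _ => ?_
          rw [Finset.mul_sum]
          refine Finset.sum_congr rfl fun b _ => ?_
          rw [Fin.prod_cons, Fin.prod_cons, htn]
          ring_nf
        rw [hTfac, I1 η hinv e N hN]
        have hEe : (∑ i, ∑ a, N i a • (e i * e a)) = E := hE.symm
        rw [hEe]
        have harg : v 0 * (E * ((∏ x, Fin.tail v x) * E ^ (g - 1)))
            = (∏ i, v i) * E ^ g := by
          rw [hvprod]
          have : E * E ^ (g - 1) = E ^ g := by
            rw [← pow_succ']
            congr 1
            omega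
          rw [← this]; ring
        rw [harg]
    · -- splitting term
      rw [Finset.sum_mul]
      refine Finset.sum_congr rfl fun g₁ hg₁ => ?_
      have hg₁le : g₁ ≤ g := by
        simp only [Finset.mem_range] at hg₁; omega
      rw [Finset.sum_mul]
      refine Finset.sum_congr rfl fun S _ => ?_
      by_cases hexc : (g₁ = 0 ∧ S = ∅) ∨ (g₁ = g ∧ S = Finset.univ)
      · simp [hexc]
      · simp only [if_neg hexc]
        have htn2 : (((g:ℤ) - (g₁:ℕ))).toNat = g - g₁ := by omega
        have hTfac :
            (∑ p, ∑ q, ∑ a, ∑ b, η (v 0) (e p * e q) * N p a * N q b *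
              (T (g₁:ℤ) (S.card + 1) (Fin.cons l (subT (Fin.tail k) S)) *
                  η 1 ((∏ x, Fin.cons (e a) (subT (Fin.tail v) S) x) * E ^ g₁) *
                (T ((g:ℤ) - g₁) (Sᶜ.card + 1) (Fin.cons (k 0 - 2 - l) (subT (Fin.tail k) Sᶜ)) *
                  η 1 ((∏ x, Fin.cons (e b) (subT (Fin.tail v) Sᶜ) x) *
                    E ^ (((g:ℤ) - (g₁:ℕ))).toNat))))
            = T (g₁:ℤ) (S.card + 1) (Fin.cons l (subT (Fin.tail k) S)) *
                T ((g:ℤ) - g₁) (Sᶜ.card + 1) (Fin.cons (k 0 - 2 - l) (subT (Fin.tail k) Sᶜ)) *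
              ∑ p, ∑ q, ∑ a, ∑ b, η (v 0) (e p * e q) * N p a * N q b *
                (η 1 (e a * ((∏ x ∈ S, Fin.tail v x) * E ^ g₁)) *
                  η 1 (e b * ((∏ x ∈ Sᶜ, Fin.tail v x) * E ^ (g - g₁)))) := by
          rw [Finset.mul_sum]
          refine Finset.sum_congr rfl fun p _ => ?_
          rw [Finset.mul_sum]
          refine Finset.sum_congr rfl fun q _ => ?_
          rw [Finset.mul_sum]
          refine Finset.sum_congr rfl fun a _ => ?_
          rw [Finset.mul_sum]
          refine Finset.sum_congr rfl fun b _ => ?_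
          rw [Fin.prod_cons, Fin.prod_cons, prodSubT, prodSubT, htn2,
            mul_assoc (e a), mul_assoc (e b)]
          ring_nf
        rw [hTfac, I2 η hinv e N hN]
        have harg : v 0 * (((∏ x ∈ S, Fin.tail v x) * E ^ g₁) *
              ((∏ x ∈ Sᶜ, Fin.tail v x) * E ^ (g - g₁)))
            = (∏ i, v i) * E ^ g := by
          rw [hvprod]
          have hp : (∏ x ∈ S, Fin.tail v x) * (∏ x ∈ Sᶜ, Fin.tail v x)
              = ∏ x, Fin.tail v x := Finset.prod_mul_prod_compl S (Fin.tail v)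
          have hpow : E ^ g₁ * E ^ (g - g₁) = E ^ g := by
            rw [← pow_add, Nat.add_sub_cancel' hg₁le]
          rw [← hp, ← hpow]
          ring_nf
        rw [harg]
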